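/- Inquisitive (global) disjunction ⩔ is strongly undefinable in propositional dependence logic D: for every context φ(a,b) of D, choosing distinct atoms p, q not occurring in φ(a,b), the formula φ(=(p), =(q)) is not equivalent to =(p) ⩔ =(q) in the model M_{pq}; hence no context uniformly defines ⩔. -/

import Mathlib

/-- Formulas of propositional dependence logic D: literals, ⊥, dependence
atoms =(p₁,…,pₙ;q), conjunction and tensor. -/
inductive DForm (α : Type) : Type
  | atom : α → DForm α
  | natom : α → DForm α                    -- negated atom ¬p
  | bot : DForm α
  | dep : List α → α → DForm α             -- dependence atom =(p₁,…,pₙ;q)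
  | and : DForm α → DForm α → DForm α
  | tensor : DForm α → DForm α → DForm α

/-- Team/inquisitive support semantics for dependence logic. -/
def dsupports {W α : Type} (V : W → α → Prop) : Set W → DForm α → Prop
  | s, .atom p => ∀ w ∈ s, V w p
  | s, .natom p => ∀ w ∈ s, ¬ V w p
  | s, .bot => s = ∅
  | s, .dep ps q => ∀ w ∈ s, ∀ w' ∈ s,
      (∀ r ∈ ps, (V w r ↔ V w' r)) → (V w q ↔ V w' q)
  | s, .and ψ χ => dsupports V s ψ ∧ dsupports V s χ
  | s, .tensor ψ χ => ∃ t₁ t₂, dsupports V t₁ ψ ∧ dsupports V t₂ χ ∧ s = t₁ ∪ t₂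

/-- The proposition of a D formula: the set of supporting states. -/
def dprop {W α : Type} (V : W → α → Prop) (φ : DForm α) : Set (Set W) :=
  {s | dsupports V s φ}

/-- The constancy atom =(p): dependence atom with empty antecedent list. -/
def con {α : Type} (p : α) : DForm α := DForm.dep [] p

/-- Tensor of sets of states. -/
def tset {W : Type} (S T : Set (Set W)) : Set (Set W) :=
  {u | ∃ s ∈ S, ∃ t ∈ T, u = s ∪ t}

/-- The model M_pq (worlds w1 = 0, w2 = 1, w3 = 2): p is true exactly at
w1, w2; q is true exactly at w2, w3; every other atom is false everywhere. -/
def VDpq {α : Type} (p q : α) : Fin 3 → α → Prop :=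
  fun w r => (r = p ∧ (w = 0 ∨ w = 1)) ∨ (r = q ∧ (w = 1 ∨ w = 2))

/-- Atoms occurring in a D formula (including inside dependence atoms). -/
def DForm.datoms {α : Type} : DForm α → Set α
  | .atom r => {r}
  | .natom r => {r}
  | .bot => ∅
  | .dep ps q => {r | r ∈ ps} ∪ {q}
  | .and ψ χ => ψ.datoms ∪ χ.datoms
  | .tensor ψ χ => ψ.datoms ∪ χ.datoms

/-- φ is a context with designated atoms a, b: a and b occur neither negated
nor inside a dependence atom. -/
def DForm.isContext {α : Type} (a b : α) : DForm α → Prop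
  | .atom _ => True
  | .natom r => r ≠ a ∧ r ≠ b
  | .bot => True
  | .dep ps q => a ∉ ps ∧ b ∉ ps ∧ q ≠ a ∧ q ≠ b
  | .and ψ χ => ψ.isContext a b ∧ χ.isContext a b
  | .tensor ψ χ => ψ.isContext a b ∧ χ.isContext a b

/-- Substitute the formulas ψ, χ for the (positive, non-dependence)
occurrences of the designated atoms a, b. -/
def dsubstAB {α : Type} [DecidableEq α] (a b : α) (ψ χ : DForm α) :
    DForm α → DForm α
  | .atom r => if r = a then ψ else if r = b then χ else .atom r
  | .natom r => .natom r
  | .bot => .bot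
  | .dep ps q => .dep ps q
  | .and θ η => .and (dsubstAB a b ψ χ θ) (dsubstAB a b ψ χ η)
  | .tensor θ η => .tensor (dsubstAB a b ψ χ θ) (dsubstAB a b ψ χ η)

/- ----------------- auxiliary machinery ----------------- -/

private lemma fin3 : ∀ w : Fin 3, w = 0 ∨ w = 1 ∨ w = 2 := by decide

/-- The invariant preserved by ∧ and ⊗ in the model M_pq. -/
def Good (S : Set (Fin 3) → Prop) : Prop :=
  (∀ s t : Set (Fin 3), t ⊆ s → S s → S t) ∧
  (S {0, 1} → S {1, 2} → S {0, 2}) ∧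
  ((S {0} ∨ S {1} ∨ S {2}) → (S {0} ∧ S {1} ∧ S {2})) ∧
  S ∅

lemma good_all {S : Set (Fin 3) → Prop} (h : ∀ s, S s) : Good S :=
  ⟨fun _ t _ _ => h t, fun _ _ => h _, fun _ => ⟨h _, h _, h _⟩, h _⟩

lemma good_and {S T : Set (Fin 3) → Prop} (hS : Good S) (hT : Good T) :
    Good (fun s => S s ∧ T s) := by
  obtain ⟨AS, BS, CS, DS⟩ := hS
  obtain ⟨AT, BT, CT, DT⟩ := hT
  refine ⟨fun s t hts h => ⟨AS s t hts h.1, AT s t hts h.2⟩,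
    fun h1 h2 => ⟨BS h1.1 h2.1, BT h1.2 h2.2⟩, ?_, DS, DT⟩
  intro h
  have hdS : S {0} ∨ S {1} ∨ S {2} := by
    rcases h with h | h | h
    exacts [Or.inl h.1, Or.inr (Or.inl h.1), Or.inr (Or.inr h.1)]
  have hdT : T {0} ∨ T {1} ∨ T {2} := by
    rcases h with h | h | h
    exacts [Or.inl h.2, Or.inr (Or.inl h.2), Or.inr (Or.inr h.2)]
  have hS' := CS hdS
  have hT' := CT hdT
  exact ⟨⟨hS'.1, hT'.1⟩, ⟨hS'.2.1, hT'.2.1⟩, ⟨hS'.2.2, hT'.2.2⟩⟩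

lemma good_tensor {S T : Set (Fin 3) → Prop} (hS : Good S) (hT : Good T) :
    Good (fun s => ∃ t₁ t₂, S t₁ ∧ T t₂ ∧ s = t₁ ∪ t₂) := by
  obtain ⟨AS, BS, CS, DS⟩ := hS
  obtain ⟨AT, BT, CT, DT⟩ := hT
  have singS : ∀ {x : Set (Fin 3)} {w : Fin 3}, w ∈ x → S x → ∀ v : Fin 3, S {v} := by
    intro x w hw hx v
    have hsw : S {w} := AS x {w} (Set.singleton_subset_iff.mpr hw) hx
    have hd : S {0} ∨ S {1} ∨ S {2} := by
      rcases fin3 w with rfl | rfl | rfl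
      exacts [Or.inl hsw, Or.inr (Or.inl hsw), Or.inr (Or.inr hsw)]
    have hall := CS hd
    rcases fin3 v with rfl | rfl | rfl
    exacts [hall.1, hall.2.1, hall.2.2]
  have singT : ∀ {x : Set (Fin 3)} {w : Fin 3}, w ∈ x → T x → ∀ v : Fin 3, T {v} := by
    intro x w hw hx v
    have hsw : T {w} := AT x {w} (Set.singleton_subset_iff.mpr hw) hx
    have hd : T {0} ∨ T {1} ∨ T {2} := by
      rcases fin3 w with rfl | rfl | rfl
      exacts [Or.inl hsw, Or.inr (Or.inl hsw), Or.inr (Or.inr hsw)]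
    have hall := CT hd
    rcases fin3 v with rfl | rfl | rfl
    exacts [hall.1, hall.2.1, hall.2.2]
  refine ⟨?_, ?_, ?_, ⟨∅, ∅, DS, DT, by simp⟩⟩
  · rintro s t hts ⟨t₁, t₂, h₁, h₂, rfl⟩
    exact ⟨t ∩ t₁, t ∩ t₂, AS _ _ Set.inter_subset_right h₁,
      AT _ _ Set.inter_subset_right h₂,
      by rw [← Set.inter_union_distrib_left, Set.inter_eq_left.mpr hts]⟩
  · rintro ⟨t₁, t₂, ht₁, ht₂, e1⟩ ⟨u₁, u₂, hu₁, hu₂, e2⟩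
    have h0 : (0 : Fin 3) ∈ t₁ ∪ t₂ := by rw [← e1]; simp
    have h2 : (2 : Fin 3) ∈ u₁ ∪ u₂ := by rw [← e2]; simp
    rcases h0 with h0 | h0 <;> rcases h2 with h2 | h2
    · -- 0 ∈ t₁ (S side), 2 ∈ u₁ (S side)
      by_cases hE : t₂ = ∅ ∧ u₂ = ∅
      · rw [hE.1, Set.union_empty] at e1
        rw [hE.2, Set.union_empty] at e2
        have s1 : S {0, 1} := by rw [e1]; exact ht₁
        have s2 : S {1, 2} := by rw [e2]; exact hu₁
        exact ⟨{0, 2}, ∅, BS s1 s2, DT, by simp⟩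
      · have hne : (∃ w, w ∈ t₂) ∨ (∃ w, w ∈ u₂) := by
          rcases not_and_or.mp hE with h | h
          · exact Or.inl (Set.nonempty_iff_ne_empty.mpr h)
          · exact Or.inr (Set.nonempty_iff_ne_empty.mpr h)
        have hT2 : T {2} := by
          rcases hne with ⟨w, hw⟩ | ⟨w, hw⟩
          · exact singT hw ht₂ 2
          · exact singT hw hu₂ 2
        exact ⟨{0}, {2}, AS _ _ (Set.singleton_subset_iff.mpr h0) ht₁, hT2,
          by ext z; simp [or_comm]⟩
    · exact ⟨{0}, {2}, AS _ _ (Set.singleton_subset_iff.mpr h0) ht₁,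
        AT _ _ (Set.singleton_subset_iff.mpr h2) hu₂, by ext z; simp [or_comm]⟩
    · exact ⟨{2}, {0}, AS _ _ (Set.singleton_subset_iff.mpr h2) hu₁,
        AT _ _ (Set.singleton_subset_iff.mpr h0) ht₂, by ext z; simp [or_comm]⟩
    · -- 0 ∈ t₂ (T side), 2 ∈ u₂ (T side)
      by_cases hE : t₁ = ∅ ∧ u₁ = ∅
      · rw [hE.1, Set.empty_union] at e1
        rw [hE.2, Set.empty_union] at e2
        have s1 : T {0, 1} := by rw [e1]; exact ht₂
        have s2 : T {1, 2} := by rw [e2]; exact hu₂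
        exact ⟨∅, {0, 2}, DS, BT s1 s2, by simp⟩
      · have hne : (∃ w, w ∈ t₁) ∨ (∃ w, w ∈ u₁) := by
          rcases not_and_or.mp hE with h | h
          · exact Or.inl (Set.nonempty_iff_ne_empty.mpr h)
          · exact Or.inr (Set.nonempty_iff_ne_empty.mpr h)
        have hS0 : S {0} := by
          rcases hne with ⟨w, hw⟩ | ⟨w, hw⟩
          · exact singS hw ht₁ 0
          · exact singS hw hu₁ 0
        exact ⟨{0}, {2}, hS0, AT _ _ (Set.singleton_subset_iff.mpr h2) hu₂,
          by ext z; simp [or_comm]⟩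
  · intro hyp
    have hv : ∃ v : Fin 3, ∃ t₁ t₂, S t₁ ∧ T t₂ ∧ ({v} : Set (Fin 3)) = t₁ ∪ t₂ := by
      rcases hyp with h | h | h
      exacts [⟨0, h⟩, ⟨1, h⟩, ⟨2, h⟩]
    obtain ⟨v, t₁, t₂, h₁, h₂, e⟩ := hv
    have hv' : v ∈ t₁ ∪ t₂ := by rw [← e]; simp
    have key : ∀ u : Fin 3, ∃ x y, S x ∧ T y ∧ ({u} : Set (Fin 3)) = x ∪ y := by
      intro u
      rcases hv' with h | h
      · exact ⟨{u}, ∅, singS h h₁ u, DT, by simp⟩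
      · exact ⟨∅, {u}, DS, singT h h₂ u, by simp⟩
    exact ⟨key 0, key 1, key 2⟩

section Model

variable {α : Type} (p q : α)

lemma Vother {r : α} (hrp : r ≠ p) (hrq : r ≠ q) (w : Fin 3) :
    ¬ VDpq p q w r := by
  rintro (⟨h, -⟩ | ⟨h, -⟩)
  exacts [hrp h, hrq h]

lemma Vp_true {w : Fin 3} (hw : w = 0 ∨ w = 1) : VDpq p q w p :=
  Or.inl ⟨rfl, hw⟩

lemma Vq_true {w : Fin 3} (hw : w = 1 ∨ w = 2) : VDpq p q w q :=
  Or.inr ⟨rfl, hw⟩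

lemma Vp_false (hpq : p ≠ q) : ¬ VDpq p q 2 p := by
  rintro (⟨-, h⟩ | ⟨h, -⟩)
  · rcases h with h | h <;> exact absurd h (by decide)
  · exact hpq h

lemma Vq_false (hpq : p ≠ q) : ¬ VDpq p q 0 q := by
  rintro (⟨h, -⟩ | ⟨-, h⟩)
  · exact hpq h.symm
  · rcases h with h | h <;> exact absurd h (by decide)

lemma con_iff (x : α) (s : Set (Fin 3)) :
    dsupports (VDpq p q) s (con x) ↔
      ∀ w ∈ s, ∀ w' ∈ s, (VDpq p q w x ↔ VDpq p q w' x) := by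
  constructor
  · intro h w hw w' hw'
    exact h w hw w' hw' (fun r hr => absurd hr List.not_mem_nil)
  · intro h w hw w' hw' _
    exact h w hw w' hw'

lemma con_sing (x : α) (v : Fin 3) : dsupports (VDpq p q) {v} (con x) := by
  rw [con_iff]
  intro w hw w' hw'
  simp only [Set.mem_singleton_iff] at hw hw'
  rw [hw, hw']

lemma con_empty (x : α) : dsupports (VDpq p q) ∅ (con x) := by
  rw [con_iff]
  intro w hw
  exact absurd hw (Set.notMem_empty w)

lemma good_conp (hpq : p ≠ q) :
    Good (fun s => dsupports (VDpq p q) s (con p)) := by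
  refine ⟨?_, ?_, fun _ => ⟨con_sing p q p 0, con_sing p q p 1, con_sing p q p 2⟩,
    con_empty p q p⟩
  · intro s t hts hs
    rw [con_iff] at hs ⊢
    intro w hw w' hw'
    exact hs w (hts hw) w' (hts hw')
  · intro _ h2
    exfalso
    rw [con_iff] at h2
    have := h2 1 (by simp) 2 (by simp)
    exact Vp_false p q hpq (this.mp (Vp_true p q (Or.inr rfl)))

lemma good_conq (hpq : p ≠ q) :
    Good (fun s => dsupports (VDpq p q) s (con q)) := by
  refine ⟨?_, ?_, fun _ => ⟨con_sing p q q 0, con_sing p q q 1, con_sing p q q 2⟩,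
    con_empty p q q⟩
  · intro s t hts hs
    rw [con_iff] at hs ⊢
    intro w hw w' hw'
    exact hs w (hts hw) w' (hts hw')
  · intro h1 _
    exfalso
    rw [con_iff] at h1
    have := h1 0 (by simp) 1 (by simp)
    exact Vq_false p q hpq (this.mpr (Vq_true p q (Or.inl rfl)))

lemma good_atom {r : α} (hrp : r ≠ p) (hrq : r ≠ q) :
    Good (fun s => dsupports (VDpq p q) s (DForm.atom r)) := by
  refine ⟨?_, ?_, ?_, fun w hw => absurd hw (Set.notMem_empty w)⟩
  · intro s t hts hs w hw
    exact hs w (hts hw)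
  · intro h1 _
    exact absurd (h1 0 (by simp)) (Vother p q hrp hrq 0)
  · intro h
    exfalso
    rcases h with h | h | h
    · exact absurd (h 0 (by simp)) (Vother p q hrp hrq 0)
    · exact absurd (h 1 (by simp)) (Vother p q hrp hrq 1)
    · exact absurd (h 2 (by simp)) (Vother p q hrp hrq 2)

lemma good_bot :
    Good (fun s : Set (Fin 3) => dsupports (VDpq p q) s DForm.bot) := by
  refine ⟨?_, ?_, ?_, rfl⟩
  · intro s t hts hs
    exact Set.subset_empty_iff.mp (hs ▸ hts)
  · intro h1 _
    exfalso
    have h0 : (0 : Fin 3) ∈ ({0, 1} : Set (Fin 3)) := by simp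
    rw [h1] at h0
    exact Set.notMem_empty _ h0
  · intro h
    exfalso
    rcases h with h | h | h <;> exact Set.singleton_ne_empty _ h

end Model

lemma main_good {α : Type} [DecidableEq α] (p q a b : α) (hpq : p ≠ q) :
    ∀ φ : DForm α, φ.isContext a b → p ∉ φ.datoms → q ∉ φ.datoms →
      Good (fun s => dsupports (VDpq p q) s (dsubstAB a b (con p) (con q) φ)) := by
  intro φ
  induction φ with
  | atom r =>
    intro _ hp hq
    simp only [DForm.datoms, Set.mem_singleton_iff] at hp hq
    simp only [dsubstAB]
    by_cases hra : r = a
    · rw [if_pos hra]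
      exact good_conp p q hpq
    · rw [if_neg hra]
      by_cases hrb : r = b
      · rw [if_pos hrb]
        exact good_conq p q hpq
      · rw [if_neg hrb]
        exact good_atom p q (Ne.symm hp) (Ne.symm hq)
  | natom r =>
    intro _ hp hq
    simp only [DForm.datoms, Set.mem_singleton_iff] at hp hq
    simp only [dsubstAB]
    exact good_all (fun s w _ => Vother p q (Ne.symm hp) (Ne.symm hq) w)
  | bot =>
    intro _ _ _
    simp only [dsubstAB]
    exact good_bot p q
  | dep ps q₀ =>
    intro _ hp hq
    simp only [DForm.datoms, Set.mem_union, Set.mem_setOf_eq,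
      Set.mem_singleton_iff, not_or] at hp hq
    simp only [dsubstAB]
    refine good_all (fun s w _ w' _ _ => ?_)
    exact iff_of_false (Vother p q (Ne.symm hp.2) (Ne.symm hq.2) w)
      (Vother p q (Ne.symm hp.2) (Ne.symm hq.2) w')
  | and ψ χ ihψ ihχ =>
    intro hctx hp hq
    obtain ⟨h1, h2⟩ : ψ.isContext a b ∧ χ.isContext a b := hctx
    have hp1 : p ∉ ψ.datoms := fun h => hp (Set.mem_union_left _ h)
    have hp2 : p ∉ χ.datoms := fun h => hp (Set.mem_union_right _ h)
    have hq1 : q ∉ ψ.datoms := fun h => hq (Set.mem_union_left _ h)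
    have hq2 : q ∉ χ.datoms := fun h => hq (Set.mem_union_right _ h)
    exact good_and (ihψ h1 hp1 hq1) (ihχ h2 hp2 hq2)
  | tensor ψ χ ihψ ihχ =>
    intro hctx hp hq
    obtain ⟨h1, h2⟩ : ψ.isContext a b ∧ χ.isContext a b := hctx
    have hp1 : p ∉ ψ.datoms := fun h => hp (Set.mem_union_left _ h)
    have hp2 : p ∉ χ.datoms := fun h => hp (Set.mem_union_right _ h)
    have hq1 : q ∉ ψ.datoms := fun h => hq (Set.mem_union_left _ h)
    have hq2 : q ∉ χ.datoms := fun h => hq (Set.mem_union_right _ h)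
    exact good_tensor (ihψ h1 hp1 hq1) (ihχ h2 hp2 hq2)

/-- the global disjunction ⩔ is strongly undefinable in D: for
every context φ(a,b) and distinct atoms p, q not occurring in φ(a,b) (and
distinct from a, b), φ(=(p),=(q)) is not equivalent in M_pq to =(p) ⩔ =(q). -/
theorem gdisj_strongly_undefinable {α : Type} [DecidableEq α] (p q a b : α)
    (hpq : p ≠ q) (hpa : p ≠ a) (hpb : p ≠ b) (hqa : q ≠ a) (hqb : q ≠ b)
    (φ : DForm α) (hctx : φ.isContext a b)
    (hp : p ∉ φ.datoms) (hq : q ∉ φ.datoms) :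
    ¬ ∀ s : Set (Fin 3),
        dsupports (VDpq p q) s (dsubstAB a b (con p) (con q) φ) ↔
          (dsupports (VDpq p q) s (con p) ∨ dsupports (VDpq p q) s (con q)) := by
  intro h
  obtain ⟨A, B, C, D⟩ := main_good p q a b hpq φ hctx hp hq
  have c01 : dsupports (VDpq p q) {0, 1} (con p) := by
    rw [con_iff]
    intro w hw w' hw'
    simp only [Set.mem_insert_iff, Set.mem_singleton_iff] at hw hw'
    exact iff_of_true (Vp_true p q hw) (Vp_true p q hw')
  have c12 : dsupports (VDpq p q) {1, 2} (con q) := by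
    rw [con_iff]
    intro w hw w' hw'
    simp only [Set.mem_insert_iff, Set.mem_singleton_iff] at hw hw'
    exact iff_of_true (Vq_true p q hw) (Vq_true p q hw')
  have S01 := (h {0, 1}).mpr (Or.inl c01)
  have S12 := (h {1, 2}).mpr (Or.inr c12)
  have S02 := B S01 S12
  rcases (h {0, 2}).mp S02 with hc | hc
  · rw [con_iff] at hc
    have := hc 0 (by simp) 2 (by simp)
    exact Vp_false p q hpq (this.mp (Vp_true p q (Or.inl rfl)))
  · rw [con_iff] at hc
    have := hc 0 (by simp) 2 (by simp)
    exact Vq_false p q hpq (this.mpr (Vq_true p q (Or.inr rfl)))
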